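/- The Minkowski T-geometry is degenerate at every point in the direction of every timelike vector: let η(u,v) = u₀v₀ − u₁v₁ − u₂v₂ − u₃v₃ be the Minkowski form on ℝ⁴, let Q₀, Q ∈ ℝ⁴ with u = Q − Q₀ timelike (η(u,u) > 0), let P₀ ∈ ℝ⁴ and a > 0. Then there exists exactly one point R ∈ ℝ⁴ satisfying η(u, R − P₀) = √(η(u,u)) · a and η(R − P₀, R − P₀) = a². -/

import Mathlib

/-- The Minkowski form η(u,v) = u₀v₀ − u₁v₁ − u₂v₂ − u₃v₃ on ℝ⁴. -/
def minkowskiForm (u v : Fin 4 → ℝ) : ℝ :=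
  u 0 * v 0 - u 1 * v 1 - u 2 * v 2 - u 3 * v 3

lemma mink_null_orth_timelike (u0 u1 u2 u3 d0 d1 d2 d3 : ℝ)
    (hs : 0 < u0^2 - u1^2 - u2^2 - u3^2)
    (horth : u0*d0 - u1*d1 - u2*d2 - u3*d3 = 0)
    (hnull : d0^2 - d1^2 - d2^2 - d3^2 = 0) :
    d0 = 0 ∧ d1 = 0 ∧ d2 = 0 ∧ d3 = 0 := by
  have keq : (u0^2 - u1^2 - u2^2 - u3^2) * d0^2 =
      -((u1*d2 - u2*d1)^2 + (u1*d3 - u3*d1)^2 + (u2*d3 - u3*d2)^2) := by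
    linear_combination (u0*d0 + u1*d1 + u2*d2 + u3*d3) * horth -
      (u1^2 + u2^2 + u3^2) * hnull
  have key : (u0^2 - u1^2 - u2^2 - u3^2) * d0^2 ≤ 0 := by
    rw [keq]
    nlinarith [sq_nonneg (u1*d2 - u2*d1), sq_nonneg (u1*d3 - u3*d1),
      sq_nonneg (u2*d3 - u3*d2)]
  have h0 : d0 = 0 := by
    by_contra h
    have hpos : 0 < d0 ^ 2 := by positivity
    nlinarith [mul_pos hs hpos]
  refine ⟨h0, ?_, ?_, ?_⟩ <;> nlinarith [sq_nonneg d1, sq_nonneg d2, sq_nonneg d3]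

/-- The Minkowski T-geometry is degenerate at every point in the direction of every
timelike vector: the parallelism-and-fixed-length equations have exactly one solution. -/
theorem minkowski_degenerate_timelike (Q₀ Q P₀ : Fin 4 → ℝ)
    (htimelike : 0 < minkowskiForm (Q - Q₀) (Q - Q₀)) (a : ℝ) (ha : 0 < a) :
    ∃! R : Fin 4 → ℝ,
      minkowskiForm (Q - Q₀) (R - P₀) =
          Real.sqrt (minkowskiForm (Q - Q₀) (Q - Q₀)) * a ∧
        minkowskiForm (R - P₀) (R - P₀) = a ^ 2 := by
  set u : Fin 4 → ℝ := Q - Q₀ with hu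
  set s : ℝ := minkowskiForm u u with hsdef
  set t : ℝ := Real.sqrt s with htdef
  have ht : 0 < t := Real.sqrt_pos.mpr htimelike
  have htne : t ≠ 0 := ht.ne'
  have ht2 : t ^ 2 = s := Real.sq_sqrt htimelike.le
  have hus : u 0 ^ 2 - u 1 ^ 2 - u 2 ^ 2 - u 3 ^ 2 = t ^ 2 := by
    rw [ht2, hsdef]; simp [minkowskiForm]; ring
  refine ⟨P₀ + (a / t) • u, ⟨?_, ?_⟩, ?_⟩
  · show minkowskiForm u (P₀ + (a / t) • u - P₀) = t * a
    have h : P₀ + (a / t) • u - P₀ = (a / t) • u := by abel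
    rw [h]
    simp only [minkowskiForm, Pi.smul_apply, smul_eq_mul]
    field_simp
    linear_combination hus
  · show minkowskiForm (P₀ + (a / t) • u - P₀) (P₀ + (a / t) • u - P₀) = a ^ 2
    have h : P₀ + (a / t) • u - P₀ = (a / t) • u := by abel
    rw [h]
    simp only [minkowskiForm, Pi.smul_apply, smul_eq_mul]
    field_simp
    linear_combination hus
  · rintro R ⟨h1, h2⟩
    have h1' : u 0 * (R 0 - P₀ 0) - u 1 * (R 1 - P₀ 1) - u 2 * (R 2 - P₀ 2) -
        u 3 * (R 3 - P₀ 3) = t * a := by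
      simpa [minkowskiForm, Pi.sub_apply] using h1
    have h2' : (R 0 - P₀ 0) ^ 2 - (R 1 - P₀ 1) ^ 2 - (R 2 - P₀ 2) ^ 2 -
        (R 3 - P₀ 3) ^ 2 = a ^ 2 := by
      have := h2
      simp only [minkowskiForm, Pi.sub_apply] at this
      linear_combination this
    have key := mink_null_orth_timelike (u 0) (u 1) (u 2) (u 3)
      (t * (R 0 - P₀ 0) - a * u 0) (t * (R 1 - P₀ 1) - a * u 1)
      (t * (R 2 - P₀ 2) - a * u 2) (t * (R 3 - P₀ 3) - a * u 3)
      (by rw [hus]; positivity)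
      (by linear_combination t * h1' - a * hus)
      (by linear_combination t ^ 2 * h2' - 2 * a * t * h1' + a ^ 2 * hus)
    obtain ⟨k0, k1, k2, k3⟩ := key
    funext i
    have hd : ∀ j : Fin 4, t * (R j - P₀ j) - a * u j = 0 →
        R j = (P₀ + (a / t) • u) j := by
      intro j hj
      simp only [Pi.add_apply, Pi.smul_apply, smul_eq_mul]
      field_simp
      linear_combination hj
    fin_cases i
    · exact hd 0 k0
    · exact hd 1 k1
    · exact hd 2 k2
    · exact hd 3 k3
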